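/- Let M_n(x) = Σ_{i=0}^n C(n,i)^2 x^{2i} and i_x = ⌊n x/(x+1)⌋. There exists N such that for all n ≥ N and all real x with (log n)/(6n) ≤ x ≤ 1, one has C(n, i_x)^2 x^{2 i_x} ≤ M_n(x) ≤ 3 i_x^{3/4} C(n, i_x)^2 x^{2 i_x}. -/

import Mathlib

open Real

/-- `M_n(x) = Σ_{i=0}^n C(n,i)^2 x^{2i}`. -/
noncomputable def Mpoly (n : ℕ) (x : ℝ) : ℝ :=
  ∑ i ∈ Finset.range (n + 1), (n.choose i : ℝ) ^ 2 * x ^ (2 * i)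

/-- `i_x = ⌊n x/(x+1)⌋`. -/
noncomputable def idx (n : ℕ) (x : ℝ) : ℕ := ⌊(n : ℝ) * x / (x + 1)⌋₊


private lemma geom_div_le {c : ℝ} (hc0 : 0 ≤ c) (hc1 : c < 1) (K : ℕ) :
    ∑ l ∈ Finset.range K, c ^ l ≤ 1 / (1 - c) := by
  have h1c : (0:ℝ) < 1 - c := by linarith
  rw [geom_sum_eq (ne_of_lt hc1) K]
  rw [show (c ^ K - 1) / (c - 1) = (1 - c ^ K) / (1 - c) by
    rw [← neg_div_neg_eq]; ring_nf]
  rw [div_le_div_iff₀ h1c h1c]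
  nlinarith [pow_nonneg hc0 K]

private lemma head_sum_le (f : ℕ → ℝ) (hf : ∀ j, 0 ≤ f j) {c : ℝ} (hc0 : 0 ≤ c) (hc1 : c < 1)
    (K : ℕ) (hstep : ∀ j, j < K → f j ≤ c * f (j+1)) :
    ∑ j ∈ Finset.range K, f j ≤ f K * (c / (1 - c)) := by
  have h1c : (0:ℝ) < 1 - c := by linarith
  induction K with
  | zero =>
    simp only [Finset.range_zero, Finset.sum_empty]
    exact mul_nonneg (hf 0) (div_nonneg hc0 h1c.le)
  | succ K ih =>
    have h1 : ∑ j ∈ Finset.range K, f j ≤ f K * (c / (1 - c)) :=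
      ih (fun j hj => hstep j (by omega))
    have h2 : f K ≤ c * f (K+1) := hstep K (by omega)
    rw [Finset.sum_range_succ]
    have e : f K * (c / (1 - c)) + f K = f K * (1 / (1 - c)) := by
      field_simp
      ring
    calc ∑ j ∈ Finset.range K, f j + f K ≤ f K * (c / (1 - c)) + f K := by linarith
      _ = f K * (1 / (1 - c)) := e
      _ ≤ (c * f (K+1)) * (1 / (1 - c)) := by
          apply mul_le_mul_of_nonneg_right h2 (by positivity)
      _ = f (K+1) * (c / (1 - c)) := by ring

private lemma tail_sum_le (f : ℕ → ℝ) (hf : ∀ j, 0 ≤ f j) {c : ℝ} (hc0 : 0 ≤ c) (hc1 : c < 1)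
    (a : ℕ) (hstep : ∀ j, a ≤ j → f (j+1) ≤ c * f j) (K : ℕ) :
    ∑ l ∈ Finset.range K, f (a+1+l) ≤ f a * (c / (1 - c)) := by
  have h1c : (0:ℝ) < 1 - c := by linarith
  have hpt : ∀ l, f (a+1+l) ≤ c^(l+1) * f a := by
    intro l
    induction l with
    | zero => simpa using hstep a le_rfl
    | succ l ih =>
      have e : a+1+(l+1) = (a+1+l)+1 := rfl
      rw [e]
      calc f ((a+1+l)+1) ≤ c * f (a+1+l) := hstep _ (by omega)
        _ ≤ c * (c^(l+1) * f a) := mul_le_mul_of_nonneg_left ih hc0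
        _ = c^(l+1+1) * f a := by ring
  calc ∑ l ∈ Finset.range K, f (a+1+l) ≤ ∑ l ∈ Finset.range K, c^(l+1) * f a :=
        Finset.sum_le_sum (fun l _ => hpt l)
    _ = (∑ l ∈ Finset.range K, c^l) * (c * f a) := by
        rw [Finset.sum_mul]; exact Finset.sum_congr rfl (fun l _ => by ring)
    _ ≤ (1/(1-c)) * (c * f a) := by
        exact mul_le_mul_of_nonneg_right (geom_div_le hc0 hc1 K) (mul_nonneg hc0 (hf a))
    _ = f a * (c/(1-c)) := by ring

private lemma key_id (n j : ℕ) (x : ℝ) (hj : j ≤ n) :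
    ((n.choose (j+1) : ℝ)^2 * x^(2*(j+1))) * ((j:ℝ)+1)^2
      = ((n.choose j : ℝ)^2 * x^(2*j)) * (((n:ℝ) - j) * x)^2 := by
  have h := Nat.choose_succ_right_eq n j
  have h' : ((n.choose (j+1) : ℝ)) * ((j:ℝ)+1) = (n.choose j : ℝ) * ((n:ℝ) - j) := by
    have h2 := congrArg (Nat.cast : ℕ → ℝ) h
    push_cast [Nat.cast_sub hj] at h2
    linarith
  have h2 : ((n.choose (j+1):ℝ)*((j:ℝ)+1))^2 = ((n.choose j:ℝ)*((n:ℝ)-(j:ℝ)))^2 := by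
    rw [h']
  have hx : x^(2*(j+1)) = x^(2*j) * x^2 := by
    rw [show 2*(j+1) = 2*j+2 by ring, pow_add]
  rw [hx]
  linear_combination (x^(2*j) * x^2) * h2


private lemma arith_key1 {N I x : ℝ} (h : I*(x+1) ≤ N*x) : I ≤ (N-I)*x := by nlinarith

private lemma arith_key2 {N I x : ℝ} (h : N*x < (I+1)*(x+1)) (hx2 : x ≤ 1) :
    (N-I)*x ≤ I+2 := by nlinarith

private lemma arith_le {N I x : ℝ} (hN : 0 < N) (hx : 0 < x) (h : I*(x+1) ≤ N*x) :
    I ≤ N := by nlinarith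

private lemma sq_lt_one'' {a : ℝ} (h0 : 0 ≤ a) (h1 : a < 1) : a^2 < 1 := by nlinarith

private lemma arith_two {I : ℝ} (h : 2 ≤ I) : (I+2)^2 ≤ 2*((I+1)^2) := by nlinarith

private lemma arith_1ms {I M : ℝ} (hI : 0 < I) (hM : 0 < M) (hMI : M ≤ I) :
    M/I ≤ 1 - ((I-M)/I)^2 := by
  rw [div_pow, le_sub_iff_add_le, div_add_div _ _ (ne_of_gt hI) (by positivity),
    div_le_one (by positivity)]
  nlinarith [mul_nonneg (mul_nonneg hI.le hM.le) (sub_nonneg.mpr hMI)]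

private lemma arith_1mr {I M : ℝ} (hI : 0 < I) (hM : (2:ℝ) ≤ M) :
    (M-1)/(I+M+1) ≤ 1 - ((I+2)/(I+M+1))^2 := by
  have hd : (0:ℝ) < I+M+1 := by linarith
  rw [div_pow, le_sub_iff_add_le, div_add_div _ _ (ne_of_gt hd) (by positivity),
    div_le_one (by positivity)]
  nlinarith [mul_nonneg (mul_nonneg (show (0:ℝ) ≤ M-1 by linarith) hd.le)
    (show (0:ℝ) ≤ I+2 by linarith)]

private lemma arith_ratio {a b : ℝ} (ha0 : 0 ≤ a) (ha1 : a < 1) (hb : 0 < b)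
    (h : b ≤ 1 - a) : a/(1-a) ≤ 1/b := by
  have h1a : (0:ℝ) < 1 - a := by linarith
  calc a/(1-a) ≤ 1/(1-a) := by
        rw [div_le_div_iff₀ h1a h1a]; nlinarith
    _ ≤ 1/b := one_div_le_one_div_of_le hb h

private lemma arith_e1 {I M : ℝ} (hM : 126 ≤ M) (h : I < (M+1)*(M+1)) :
    I/M ≤ M+3 := by
  rw [div_le_iff₀ (by linarith)]; nlinarith

private lemma arith_e2 {I M : ℝ} (hM : 126 ≤ M) (h : I < (M+1)*(M+1)) :
    (I+M+1)/(M-1) ≤ M+5 := by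
  rw [div_le_iff₀ (by linarith)]; nlinarith

private lemma arith_final {T M : ℝ} (hT : 0 ≤ T) (hM : 15 ≤ M) :
    T*(M+3) + (2*M+1)*(2*T) + (2*T)*(M+5) ≤ (8*M)*T := by
  nlinarith [mul_nonneg hT (show (0:ℝ) ≤ M-15 by linarith)]

private lemma arith_8b {a b : ℝ} (ha : 3 ≤ a) (hb : 0 ≤ b) : 8*b ≤ (3*a)*b := by
  nlinarith [mul_nonneg (show (0:ℝ) ≤ 3*a - 8 by linarith) hb]

set_option maxHeartbeats 1000000 in
/-- for `n` large and `(log n)/(6n) ≤ x ≤ 1`,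
`C(n,i_x)^2 x^{2 i_x} ≤ M_n(x) ≤ 3 i_x^{3/4} C(n,i_x)^2 x^{2 i_x}`. -/
theorem stmt_1 :
    ∃ N : ℕ, ∀ n : ℕ, N ≤ n → ∀ x : ℝ,
      Real.log n / (6 * n) ≤ x → x ≤ 1 →
      (n.choose (idx n x) : ℝ) ^ 2 * x ^ (2 * idx n x) ≤ Mpoly n x ∧
        Mpoly n x ≤
          3 * (idx n x : ℝ) ^ ((3 : ℝ) / 4) *
            ((n.choose (idx n x) : ℝ) ^ 2 * x ^ (2 * idx n x)) := by
  refine ⟨⌈Real.exp 200000⌉₊, ?_⟩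
  intro n hn x hx1 hx2
  have hn1 : Real.exp 200000 ≤ (n:ℝ) :=
    le_trans (Nat.le_ceil _) (by exact_mod_cast hn)
  have hn0 : (0:ℝ) < n := lt_of_lt_of_le (Real.exp_pos _) hn1
  have hlogn : (200000:ℝ) ≤ Real.log n := by
    have h := Real.log_le_log (Real.exp_pos 200000) hn1
    rwa [Real.log_exp] at h
  have hx0 : (0:ℝ) < x :=
    lt_of_lt_of_le (div_pos (by linarith) (by positivity)) hx1
  have hx1p : (0:ℝ) < x + 1 := by linarith
  -- floor bounds
  have h0 : 0 ≤ (n:ℝ) * x / (x+1) := by positivity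
  have hfl : ((idx n x : ℕ):ℝ) ≤ (n:ℝ) * x / (x+1) := by
    unfold idx; exact Nat.floor_le h0
  have hfl2 : (n:ℝ) * x / (x+1) < ((idx n x : ℕ):ℝ) + 1 := by
    unfold idx; exact Nat.lt_floor_add_one _
  obtain ⟨i, hidef⟩ : ∃ i : ℕ, idx n x = i := ⟨_, rfl⟩
  rw [hidef] at hfl hfl2 ⊢
  have hiub : (i:ℝ) * (x+1) ≤ (n:ℝ) * x := by
    calc (i:ℝ)*(x+1) ≤ ((n:ℝ)*x/(x+1))*(x+1) :=
          mul_le_mul_of_nonneg_right hfl hx1p.le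
      _ = (n:ℝ)*x := by field_simp
  have hilb : (n:ℝ)*x < ((i:ℝ)+1)*(x+1) := by
    calc (n:ℝ)*x = ((n:ℝ)*x/(x+1))*(x+1) := by field_simp
      _ < ((i:ℝ)+1)*(x+1) := mul_lt_mul_of_pos_right hfl2 hx1p
  have hkey1 : (i:ℝ) ≤ ((n:ℝ) - i) * x := arith_key1 hiub
  have hkey2 : ((n:ℝ) - i) * x ≤ (i:ℝ) + 2 := arith_key2 hilb hx2
  -- i is large
  have hilarge : (16000:ℝ) ≤ (i:ℝ) := by
    have hnx : Real.log n / 6 ≤ (n:ℝ) * x := by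
      calc Real.log n / 6 = (n:ℝ) * (Real.log n / (6*n)) := by field_simp
        _ ≤ (n:ℝ) * x := mul_le_mul_of_nonneg_left hx1 hn0.le
    have hq : (n:ℝ)*x/2 ≤ (n:ℝ)*x/(x+1) := by
      apply div_le_div_of_nonneg_left (by positivity) hx1p (by linarith)
    have : (16666:ℝ) ≤ (n:ℝ)*x/(x+1) := by
      calc (16666:ℝ) ≤ Real.log n / 12 := by linarith
        _ = (Real.log n / 6)/2 := by ring
        _ ≤ ((n:ℝ)*x)/2 := by linarith
        _ ≤ (n:ℝ)*x/(x+1) := hq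
    linarith [hfl2]
  have hin : i ≤ n := by
    have h : (i:ℝ) ≤ (n:ℝ) := arith_le hn0 hx0 hiub
    exact_mod_cast h
  have h2in : 2*i ≤ n := by
    have hni : (0:ℝ) ≤ (n:ℝ) - i := by
      have : (i:ℝ) ≤ (n:ℝ) := by exact_mod_cast hin
      linarith
    have h : 2*(i:ℝ) ≤ (n:ℝ) := by
      have := mul_le_of_le_one_right hni hx2
      linarith [hkey1]
    exact_mod_cast h
  have hi16000 : 16000 ≤ i := by exact_mod_cast hilarge
  -- m = sqrt i
  obtain ⟨m, hmdef⟩ : ∃ m : ℕ, Nat.sqrt i = m := ⟨_, rfl⟩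
  have hmsq : m*m ≤ i := by
    rw [← hmdef]; simpa [pow_two] using Nat.sqrt_le' i
  have hisq : i < (m+1)*(m+1) := by
    rw [← hmdef]
    have h := Nat.lt_succ_sqrt' i
    simpa [Nat.succ_eq_add_one, pow_two] using h
  have hm126 : 126 ≤ m := by
    rw [← hmdef]
    exact Nat.le_sqrt.mpr (by omega : 126*126 ≤ i)
  have hmi : m ≤ i := by rw [← hmdef]; exact Nat.sqrt_le_self i
  have hM126 : (126:ℝ) ≤ (m:ℝ) := by exact_mod_cast hm126
  have hMsq : (m:ℝ)*(m:ℝ) ≤ (i:ℝ) := by exact_mod_cast hmsq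
  have hIsq : (i:ℝ) < ((m:ℝ)+1)*((m:ℝ)+1) := by exact_mod_cast hisq
  have hMI : (m:ℝ) ≤ (i:ℝ) := by exact_mod_cast hmi
  have hIpos : (0:ℝ) < (i:ℝ) := by linarith
  have hMpos : (0:ℝ) < (m:ℝ) := by linarith
  -- the term function
  obtain ⟨t, ht⟩ : ∃ t : ℕ → ℝ, t = fun j => (n.choose j : ℝ)^2 * x^(2*j) := ⟨_, rfl⟩
  have ht0 : ∀ j, 0 ≤ t j := fun j => by
    simp only [ht]; positivity
  have htpos : 0 < t i := by
    have hc : 0 < n.choose i := Nat.choose_pos hin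
    have hc' : (0:ℝ) < (n.choose i : ℝ) := by exact_mod_cast hc
    simp only [ht]
    positivity
  have hMp : Mpoly n x = ∑ j ∈ Finset.range (n+1), t j := by
    simp only [Mpoly, ht]
  have hti_eq : (n.choose i : ℝ)^2 * x^(2*i) = t i := by simp only [ht]
  have key_t : ∀ j, j ≤ n → t (j+1) * ((j:ℝ)+1)^2 = t j * (((n:ℝ) - j) * x)^2 := by
    intro j hj
    simp only [ht]
    exact key_id n j x hj
  -- step lemmas
  have step_up : ∀ j, j < i → t j ≤ t (j+1) := by
    intro j hj
    have hjn : j ≤ n := le_trans hj.le hin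
    have hid := key_t j hjn
    have hji : (j:ℝ) ≤ (i:ℝ) := by exact_mod_cast hj.le
    have hj1 : (j:ℝ)+1 ≤ (i:ℝ) := by
      have : (j:ℝ)+1 ≤ (i:ℝ) := by exact_mod_cast hj
      linarith
    have h1 : (j:ℝ)+1 ≤ ((n:ℝ) - j)*x := by
      have hle : ((n:ℝ)-i)*x ≤ ((n:ℝ)-j)*x :=
        mul_le_mul_of_nonneg_right (by linarith) hx0.le
      linarith [hkey1]
    have h2 : t j * ((j:ℝ)+1)^2 ≤ t (j+1) * ((j:ℝ)+1)^2 := by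
      calc t j * ((j:ℝ)+1)^2 ≤ t j * (((n:ℝ)-j)*x)^2 :=
            mul_le_mul_of_nonneg_left (pow_le_pow_left₀ (by positivity) h1 2) (ht0 j)
        _ = t (j+1) * ((j:ℝ)+1)^2 := (hid).symm
    exact le_of_mul_le_mul_right h2 (by positivity)
  have mono_up : ∀ d a, a + d ≤ i → t a ≤ t (a + d) := by
    intro d
    induction d with
    | zero => intro a _; simp
    | succ d ih =>
      intro a h
      calc t a ≤ t (a+d) := ih a (by omega)
        _ ≤ t (a+d+1) := step_up _ (by omega)
  have step_down : ∀ j, i+1 ≤ j → t (j+1) ≤ t j := by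
    intro j hj
    by_cases hjn : j < n
    · have hid := key_t j hjn.le
      have hij : (i:ℝ) ≤ (j:ℝ) := by exact_mod_cast le_trans (by omega) hj
      have hjR : (j:ℝ) ≤ (n:ℝ) := by exact_mod_cast hjn.le
      have hnjx0 : 0 ≤ ((n:ℝ)-j)*x := mul_nonneg (by linarith) hx0.le
      have hup : ((n:ℝ)-j)*x ≤ (i:ℝ) + 2 := by
        have hle : ((n:ℝ)-j)*x ≤ ((n:ℝ)-i)*x :=
          mul_le_mul_of_nonneg_right (by linarith) hx0.le
        linarith [hkey2]
      have hi2 : (i:ℝ)+2 ≤ (j:ℝ)+1 := by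
        have : (i:ℝ)+1 ≤ (j:ℝ) := by exact_mod_cast hj
        linarith
      have h2 : t (j+1) * ((j:ℝ)+1)^2 ≤ t j * ((j:ℝ)+1)^2 := by
        calc t (j+1) * ((j:ℝ)+1)^2 = t j * (((n:ℝ)-j)*x)^2 := hid
          _ ≤ t j * ((j:ℝ)+1)^2 :=
            mul_le_mul_of_nonneg_left
              (pow_le_pow_left₀ hnjx0 (by linarith) 2) (ht0 j)
      exact le_of_mul_le_mul_right h2 (by positivity)
    · have hz : n.choose (j+1) = 0 := Nat.choose_eq_zero_of_lt (by omega)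
      have : t (j+1) = 0 := by simp only [ht, hz]; simp
      rw [this]; exact ht0 j
  have mono_down : ∀ d a, i+1 ≤ a → t (a + d) ≤ t a := by
    intro d
    induction d with
    | zero => intro a _; simp
    | succ d ih =>
      intro a h
      calc t (a+(d+1)) = t ((a+d)+1) := rfl
        _ ≤ t (a+d) := step_down _ (by omega)
        _ ≤ t a := ih a h
  have hti1 : t (i+1) ≤ 2 * t i := by
    have hid := key_t i hin
    have h1 : (((n:ℝ)-i)*x)^2 ≤ ((i:ℝ)+2)^2 :=
      pow_le_pow_left₀ (by linarith [hkey1]) hkey2 2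
    have h2 : t (i+1) * ((i:ℝ)+1)^2 ≤ t i * ((i:ℝ)+2)^2 := by
      calc t (i+1) * ((i:ℝ)+1)^2 = t i * (((n:ℝ)-i)*x)^2 := hid
        _ ≤ t i * ((i:ℝ)+2)^2 := mul_le_mul_of_nonneg_left h1 (ht0 i)
    have h4 : t i * ((i:ℝ)+2)^2 ≤ t i * (2*((i:ℝ)+1)^2) :=
      mul_le_mul_of_nonneg_left (arith_two (by linarith)) (ht0 i)
    have h3 : t (i+1) * ((i:ℝ)+1)^2 ≤ (2 * t i) * ((i:ℝ)+1)^2 := by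
      nlinarith [h2, h4]
    exact le_of_mul_le_mul_right h3 (by positivity)
  -- geometric ratios
  obtain ⟨s, hs_def⟩ : ∃ s : ℝ, s = (((i:ℝ) - m)/(i:ℝ))^2 := ⟨_, rfl⟩
  obtain ⟨r, hr_def⟩ : ∃ r : ℝ, r = (((i:ℝ) + 2)/((i:ℝ) + m + 1))^2 := ⟨_, rfl⟩
  have hs0 : 0 ≤ s := hs_def ▸ sq_nonneg _
  have hr0 : 0 ≤ r := hr_def ▸ sq_nonneg _
  have hs1 : s < 1 := by
    have ha : 0 ≤ ((i:ℝ)-m)/(i:ℝ) := div_nonneg (by linarith) hIpos.le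
    have hb : ((i:ℝ)-m)/(i:ℝ) < 1 := by
      rw [div_lt_one hIpos]; linarith
    rw [hs_def]; exact sq_lt_one'' ha hb
  have hr1 : r < 1 := by
    have hd : (0:ℝ) < (i:ℝ)+m+1 := by linarith
    have ha : 0 ≤ ((i:ℝ)+2)/((i:ℝ)+m+1) := by positivity
    have hb : ((i:ℝ)+2)/((i:ℝ)+m+1) < 1 := by
      rw [div_lt_one hd]; linarith
    rw [hr_def]; exact sq_lt_one'' ha hb
  have h1s : (0:ℝ) < 1 - s := by linarith
  have h1r : (0:ℝ) < 1 - r := by linarith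
  have step_far_left : ∀ j, j < i - m → t j ≤ s * t (j+1) := by
    intro j hj
    have hji : j < i := by omega
    have hjn : j ≤ n := by omega
    have hid := key_t j hjn
    have hj1 : (j:ℝ)+1 ≤ (i:ℝ) - m := by
      have h : (j + 1 + m : ℕ) ≤ i := by omega
      have h' := (Nat.cast_le (α := ℝ)).mpr h
      push_cast at h'
      linarith
    have hjiR : (j:ℝ) ≤ (i:ℝ) := by exact_mod_cast hji.le
    have hnj : (i:ℝ) ≤ ((n:ℝ) - j)*x := by
      have hle : ((n:ℝ)-i)*x ≤ ((n:ℝ)-j)*x :=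
        mul_le_mul_of_nonneg_right (by linarith) hx0.le
      linarith [hkey1]
    have h2 : t j * (i:ℝ)^2 ≤ t (j+1) * ((i:ℝ) - m)^2 := by
      calc t j * (i:ℝ)^2 ≤ t j * (((n:ℝ)-j)*x)^2 :=
            mul_le_mul_of_nonneg_left (pow_le_pow_left₀ hIpos.le hnj 2) (ht0 j)
        _ = t (j+1) * ((j:ℝ)+1)^2 := hid.symm
        _ ≤ t (j+1) * ((i:ℝ)-m)^2 :=
            mul_le_mul_of_nonneg_left
              (pow_le_pow_left₀ (by positivity) hj1 2) (ht0 (j+1))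
    have h3 : t j ≤ t (j+1) * ((i:ℝ)-m)^2 / (i:ℝ)^2 := by
      rw [le_div_iff₀ (by positivity)]; linarith
    calc t j ≤ t (j+1) * ((i:ℝ)-m)^2/(i:ℝ)^2 := h3
      _ = s * t (j+1) := by rw [hs_def, div_pow]; ring
  have step_far_right : ∀ j, i + m ≤ j → t (j+1) ≤ r * t j := by
    intro j hj
    by_cases hjn : j < n
    · have hid := key_t j hjn.le
      have hij : (i:ℝ) ≤ (j:ℝ) := by exact_mod_cast le_trans (Nat.le_add_right i m) hj
      have hjR : (j:ℝ) ≤ (n:ℝ) := by exact_mod_cast hjn.le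
      have hnjx0 : 0 ≤ ((n:ℝ)-j)*x := mul_nonneg (by linarith) hx0.le
      have hup : ((n:ℝ)-j)*x ≤ (i:ℝ) + 2 := by
        have hle : ((n:ℝ)-j)*x ≤ ((n:ℝ)-i)*x :=
          mul_le_mul_of_nonneg_right (by linarith) hx0.le
        linarith [hkey2]
      have hjm : (i:ℝ) + m + 1 ≤ (j:ℝ)+1 := by
        have h := (Nat.cast_le (α := ℝ)).mpr hj
        push_cast at h
        linarith
      have h2 : t (j+1) * ((i:ℝ)+m+1)^2 ≤ t j * ((i:ℝ)+2)^2 := by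
        calc t (j+1) * ((i:ℝ)+m+1)^2 ≤ t (j+1) * ((j:ℝ)+1)^2 :=
              mul_le_mul_of_nonneg_left
                (pow_le_pow_left₀ (by linarith) hjm 2) (ht0 (j+1))
          _ = t j * (((n:ℝ)-j)*x)^2 := hid
          _ ≤ t j * ((i:ℝ)+2)^2 :=
              mul_le_mul_of_nonneg_left (pow_le_pow_left₀ hnjx0 hup 2) (ht0 j)
      have h3 : t (j+1) ≤ t j * ((i:ℝ)+2)^2/((i:ℝ)+m+1)^2 := by
        rw [le_div_iff₀ (by positivity)]; linarith
      calc t (j+1) ≤ t j * ((i:ℝ)+2)^2/((i:ℝ)+m+1)^2 := h3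
        _ = r * t j := by rw [hr_def, div_pow]; ring
    · have hz : n.choose (j+1) = 0 := Nat.choose_eq_zero_of_lt (by omega)
      have hz' : t (j+1) = 0 := by simp only [ht, hz]; simp
      rw [hz']; exact mul_nonneg hr0 (ht0 j)
  -- bounds on the three pieces
  constructor
  · rw [hMp, hti_eq]
    exact Finset.single_le_sum (fun j _ => ht0 j) (Finset.mem_range.mpr (by omega))
  · rw [hMp]
    have hKn : i + m + 1 ≤ n + 1 := by omega
    have hK2 : i - m ≤ i + m + 1 := by omega
    have hsplit : ∑ j ∈ Finset.range (n+1), t j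
        = (∑ j ∈ Finset.range (i-m), t j)
          + (∑ j ∈ Finset.Ico (i-m) (i+m+1), t j)
          + (∑ j ∈ Finset.Ico (i+m+1) (n+1), t j) := by
      rw [← Finset.sum_range_add_sum_Ico t hKn, ← Finset.sum_range_add_sum_Ico t hK2]
    -- S1
    have hS1a : ∑ j ∈ Finset.range (i-m), t j ≤ t (i-m) * (s/(1-s)) :=
      head_sum_le t ht0 hs0 hs1 (i-m) step_far_left
    have htim : t (i-m) ≤ t i := by
      have h := mono_up m (i-m) (by omega)
      rwa [show (i-m)+m = i by omega] at h
    have hS1 : ∑ j ∈ Finset.range (i-m), t j ≤ t i * (s/(1-s)) := by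
      calc ∑ j ∈ Finset.range (i-m), t j ≤ t (i-m) * (s/(1-s)) := hS1a
        _ ≤ t i * (s/(1-s)) :=
          mul_le_mul_of_nonneg_right htim (div_nonneg hs0 h1s.le)
    -- S2
    have hmid : ∀ j ∈ Finset.Ico (i-m) (i+m+1), t j ≤ 2 * t i := by
      intro j hj
      rw [Finset.mem_Ico] at hj
      by_cases hji : j ≤ i
      · have h := mono_up (i-j) j (by omega)
        rw [show j + (i-j) = i by omega] at h
        linarith [htpos]
      · have h := mono_down (j-(i+1)) (i+1) le_rfl
        rw [show (i+1) + (j-(i+1)) = j by omega] at h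
        linarith [hti1]
    have hS2 : ∑ j ∈ Finset.Ico (i-m) (i+m+1), t j ≤ (2*(m:ℝ)+1) * (2 * t i) := by
      have h := Finset.sum_le_card_nsmul _ _ _ hmid
      rw [Nat.card_Ico, show (i+m+1) - (i-m) = 2*m+1 by omega] at h
      have h2 : ((2*m+1 : ℕ) : ℝ) * (2 * t i) = (2*(m:ℝ)+1) * (2 * t i) := by
        push_cast; ring
      calc ∑ j ∈ Finset.Ico (i-m) (i+m+1), t j ≤ (2*m+1) • (2 * t i) := h
        _ = ((2*m+1 : ℕ) : ℝ) * (2 * t i) := by rw [nsmul_eq_mul]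
        _ = (2*(m:ℝ)+1) * (2 * t i) := h2
    -- S3
    have htm2 : t (i+m) ≤ 2 * t i := by
      have h := mono_down (m-1) (i+1) le_rfl
      rw [show (i+1) + (m-1) = i + m by omega] at h
      linarith [hti1]
    have hS3a : ∑ j ∈ Finset.Ico (i+m+1) (n+1), t j ≤ t (i+m) * (r/(1-r)) := by
      rw [Finset.sum_Ico_eq_sum_range]
      exact tail_sum_le t ht0 hr0 hr1 (i+m) step_far_right _
    have hS3 : ∑ j ∈ Finset.Ico (i+m+1) (n+1), t j ≤ (2 * t i) * (r/(1-r)) := by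
      calc ∑ j ∈ Finset.Ico (i+m+1) (n+1), t j ≤ t (i+m) * (r/(1-r)) := hS3a
        _ ≤ (2 * t i) * (r/(1-r)) :=
          mul_le_mul_of_nonneg_right htm2 (div_nonneg hr0 h1r.le)
    -- ratio bounds
    have h1ms : (m:ℝ)/(i:ℝ) ≤ 1 - s := by
      rw [hs_def]; exact arith_1ms hIpos hMpos hMI
    have h1mr : ((m:ℝ)-1)/((i:ℝ)+m+1) ≤ 1 - r := by
      rw [hr_def]; exact arith_1mr hIpos (by linarith)
    have hS1' : s/(1-s) ≤ (i:ℝ)/(m:ℝ) := by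
      have hMIpos : (0:ℝ) < (m:ℝ)/(i:ℝ) := by positivity
      calc s/(1-s) ≤ 1/((m:ℝ)/(i:ℝ)) := arith_ratio hs0 hs1 hMIpos h1ms
        _ = (i:ℝ)/(m:ℝ) := one_div_div _ _
    have hS3' : r/(1-r) ≤ ((i:ℝ)+m+1)/((m:ℝ)-1) := by
      have hm1 : (0:ℝ) < (m:ℝ)-1 := by linarith
      have hd : (0:ℝ) < (i:ℝ)+m+1 := by linarith
      have hq : (0:ℝ) < ((m:ℝ)-1)/((i:ℝ)+m+1) := by positivity
      calc r/(1-r) ≤ 1/(((m:ℝ)-1)/((i:ℝ)+m+1)) := arith_ratio hr0 hr1 hq h1mr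
        _ = ((i:ℝ)+m+1)/((m:ℝ)-1) := one_div_div _ _
    -- elementary bounds
    have hm1 : (0:ℝ) < (m:ℝ)-1 := by linarith
    have e1 : (i:ℝ)/(m:ℝ) ≤ (m:ℝ)+3 := arith_e1 hM126 hIsq
    have e2 : ((i:ℝ)+m+1)/((m:ℝ)-1) ≤ (m:ℝ)+5 := arith_e2 hM126 hIsq
    -- final rpow bound
    have hMle : (m:ℝ) ≤ Real.sqrt (i:ℝ) := by
      have h := Real.sqrt_le_sqrt (show (m:ℝ)^2 ≤ (i:ℝ) by rw [pow_two]; exact hMsq)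
      rwa [Real.sqrt_sq hMpos.le] at h
    have hI4 : (3:ℝ) ≤ (i:ℝ) ^ ((1:ℝ)/4) := by
      have h81 : (81:ℝ) ≤ (i:ℝ) := by linarith
      have hmono : (81:ℝ)^((1:ℝ)/4) ≤ (i:ℝ)^((1:ℝ)/4) :=
        Real.rpow_le_rpow (by norm_num) h81 (by norm_num)
      have h3 : (81:ℝ)^((1:ℝ)/4) = 3 := by
        rw [show (81:ℝ) = 3^(4:ℕ) by norm_num, ← Real.rpow_natCast 3 4,
          ← Real.rpow_mul (by norm_num)]
        norm_num
      linarith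
    have hsplit34 : (i:ℝ)^((3:ℝ)/4) = (i:ℝ)^((1:ℝ)/2) * (i:ℝ)^((1:ℝ)/4) := by
      rw [← Real.rpow_add hIpos]; norm_num
    have hsq12 : Real.sqrt (i:ℝ) = (i:ℝ)^((1:ℝ)/2) := Real.sqrt_eq_rpow (i:ℝ)
    have h8M : 8*(m:ℝ) ≤ 3 * (i:ℝ)^((3:ℝ)/4) := by
      have h12 : (0:ℝ) ≤ (i:ℝ)^((1:ℝ)/2) := Real.rpow_nonneg hIpos.le _
      calc 8*(m:ℝ) ≤ 8 * (i:ℝ)^((1:ℝ)/2) := by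
            rw [← hsq12]; linarith [hMle]
        _ ≤ (3 * (i:ℝ)^((1:ℝ)/4)) * (i:ℝ)^((1:ℝ)/2) := arith_8b hI4 h12
        _ = 3 * (i:ℝ)^((3:ℝ)/4) := by rw [hsplit34]; ring
    -- assemble
    rw [hti_eq, hsplit]
    calc (∑ j ∈ Finset.range (i-m), t j)
          + (∑ j ∈ Finset.Ico (i-m) (i+m+1), t j)
          + (∑ j ∈ Finset.Ico (i+m+1) (n+1), t j)
        ≤ t i * ((i:ℝ)/(m:ℝ)) + (2*(m:ℝ)+1) * (2*t i)
            + (2*t i) * (((i:ℝ)+m+1)/((m:ℝ)-1)) := by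
          have b1 : ∑ j ∈ Finset.range (i-m), t j ≤ t i * ((i:ℝ)/(m:ℝ)) :=
            le_trans hS1 (mul_le_mul_of_nonneg_left hS1' (ht0 i))
          have b3 : ∑ j ∈ Finset.Ico (i+m+1) (n+1), t j
              ≤ (2*t i) * (((i:ℝ)+m+1)/((m:ℝ)-1)) :=
            le_trans hS3 (mul_le_mul_of_nonneg_left hS3'
              (by linarith [ht0 i]))
          linarith [hS2]
      _ ≤ t i * ((m:ℝ)+3) + (2*(m:ℝ)+1) * (2*t i) + (2*t i) * ((m:ℝ)+5) := by
          have b1 := mul_le_mul_of_nonneg_left e1 (ht0 i)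
          have b3 := mul_le_mul_of_nonneg_left e2 (show (0:ℝ) ≤ 2*t i by linarith [ht0 i])
          linarith
      _ ≤ (8*(m:ℝ)) * t i := arith_final (ht0 i) (by linarith)
      _ ≤ (3 * (i:ℝ)^((3:ℝ)/4)) * t i :=
          mul_le_mul_of_nonneg_right h8M (ht0 i)
      _ = 3 * (i:ℝ)^((3:ℝ)/4) * t i := by ring
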